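/- arXiv:1405.2238 — 2 statements merged into one kernel-verified Lean document; each statement's English description precedes it below -/
import Mathlib

section
/- Every σ-maxitive measure of bounded variation on a σ-algebra 𝓑 is finite and essential. -/
open scoped ENNReal
open Set Filter MeasureTheory

variable {E : Type*}

/-- `f : E → [0,∞]` is `𝓑`-measurable: `{f > t}` is measurable for every `t`. -/
def Premeasurable [MeasurableSpace E] (f : E → ℝ≥0∞) : Prop :=
  ∀ t : ℝ≥0∞, MeasurableSet {x | t < f x}

/-- A maxitive measure on the σ-algebra of measurable subsets of `E`. -/
def Maxitive [MeasurableSpace E] (ν : Set E → ℝ≥0∞) : Prop :=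
  ν ∅ = 0 ∧ ∀ A B : Set E, MeasurableSet A → MeasurableSet B →
    ν (A ∪ B) = max (ν A) (ν B)

/-- A σ-maxitive measure: a maxitive measure commuting with countable nondecreasing unions. -/
def SigmaMaxitive [MeasurableSpace E] (ν : Set E → ℝ≥0∞) : Prop :=
  Maxitive ν ∧ ∀ B : ℕ → Set E, (∀ n, MeasurableSet (B n)) → Monotone B →
    ν (⋃ n, B n) = ⨆ n, ν (B n)

/-- `N` is `τ`-negligible: it is contained in a measurable set of `τ`-measure zero. -/
def Negligible [MeasurableSpace E] (τ : Set E → ℝ≥0∞) (N : Set E) : Prop :=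
  ∃ B : Set E, MeasurableSet B ∧ N ⊆ B ∧ τ B = 0

/-- The `τ`-essential supremum of `f` over `B`: `inf { t > 0 : B ∩ {f > t} is τ-negligible }`. -/
noncomputable def essSupOn [MeasurableSpace E] (τ : Set E → ℝ≥0∞) (f : E → ℝ≥0∞)
    (B : Set E) : ℝ≥0∞ :=
  sInf {t : ℝ≥0∞ | 0 < t ∧ Negligible τ (B ∩ {x | t < f x})}

/-- `ν ≪ τ`: absolute continuity. -/
def AbsCont [MeasurableSpace E] (ν τ : Set E → ℝ≥0∞) : Prop :=
  ∀ B : Set E, MeasurableSet B → τ B = 0 → ν B = 0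

/-- `ν ⋘ τ`: strong absolute continuity, i.e. `ν` has a measurable relative density
with respect to `τ`. -/
def StrongAbsCont [MeasurableSpace E] (ν τ : Set E → ℝ≥0∞) : Prop :=
  ∃ f : E → ℝ≥0∞, Premeasurable f ∧ ∀ B : Set E, MeasurableSet B → ν B = essSupOn τ f B

/-- `c` is a cardinal density of `ν`: `ν B = sup_{x ∈ B} c x` for every measurable `B`. -/
def IsCardinalDensity [MeasurableSpace E] (ν : Set E → ℝ≥0∞) (c : E → ℝ≥0∞) : Prop :=
  ∀ B : Set E, MeasurableSet B → ν B = ⨆ x ∈ B, c x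

/-- `τ` is essential: there exists a σ-finite σ-additive measure `m` with the same
null measurable sets. -/
def Essential [MeasurableSpace E] (τ : Set E → ℝ≥0∞) : Prop :=
  ∃ m : Measure E, SigmaFinite m ∧ ∀ B : Set E, MeasurableSet B → (0 < τ B ↔ 0 < m B)

/-- A σ-ideal of the σ-algebra of measurable sets. -/
def SigmaIdeal [MeasurableSpace E] (I : Set (Set E)) : Prop :=
  I.Nonempty ∧ (∀ S ∈ I, MeasurableSet S) ∧
  (∀ f : ℕ → Set E, (∀ n, f n ∈ I) → (⋃ n, f n) ∈ I) ∧
  (∀ B S : Set E, MeasurableSet B → S ∈ I → B ⊆ S → B ∈ I)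

/-- `τ` is σ-principal: every σ-ideal has a greatest element modulo `τ`-negligible sets. -/
def SigmaPrincipal [MeasurableSpace E] (τ : Set E → ℝ≥0∞) : Prop :=
  ∀ I : Set (Set E), SigmaIdeal I → ∃ L ∈ I, ∀ S ∈ I, Negligible τ (S \ L)

/-- A pseudo-multiplication on `[0,∞]`. -/
structure PseudoMul where
  op : ℝ≥0∞ → ℝ≥0∞ → ℝ≥0∞
  assoc : ∀ a b c, op (op a b) c = op a (op b c)
  contOn : ContinuousOn (fun q : ℝ≥0∞ × ℝ≥0∞ => op q.1 q.2) (Set.Ioo 0 ⊤ ×ˢ Set.univ)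
  contLeft : ∀ t, ContinuousOn (fun s => op s t) (Set.Ioi 0)
  monoLeft : ∀ t, Monotone fun s => op s t
  monoRight : ∀ s, Monotone (op s)
  one : ℝ≥0∞
  one_op : ∀ t, op one t = t
  eq_zero : ∀ s t, op s t = 0 → s = 0 ∨ t = 0
  zero_op : ∀ t, op 0 t = 0
  op_zero : ∀ t, op t 0 = 0

/-- `t` is `⊙`-finite: `inf_{s > 0} s ⊙ t = 0`. -/
def OdotFinite (p : PseudoMul) (t : ℝ≥0∞) : Prop :=
  (⨅ s ∈ Set.Ioi (0 : ℝ≥0∞), p.op s t) = 0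

/-- The idempotent `⊙`-integral `∫_B f ⊙ dτ = sup_{t ∈ [0,∞)} t ⊙ τ (B ∩ {f > t})`. -/
noncomputable def iInt [MeasurableSpace E] (p : PseudoMul) (τ : Set E → ℝ≥0∞)
    (f : E → ℝ≥0∞) (B : Set E) : ℝ≥0∞ :=
  ⨆ t ∈ Set.Iio (⊤ : ℝ≥0∞), p.op t (τ (B ∩ {x | t < f x}))

/-- `ν ≪_⊙ τ`: `ν B ≤ ∞ ⊙ τ B` for every measurable `B`. -/
def OdotAbsCont [MeasurableSpace E] (p : PseudoMul) (ν τ : Set E → ℝ≥0∞) : Prop :=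
  ∀ B : Set E, MeasurableSet B → ν B ≤ p.op ⊤ (τ B)

/-- `ν` is semi-`⊙`-finite. -/
def SemiOdotFinite [MeasurableSpace E] (p : PseudoMul) (ν : Set E → ℝ≥0∞) : Prop :=
  ∀ B : Set E, MeasurableSet B →
    ν B = ⨆ A ∈ {A : Set E | MeasurableSet A ∧ A ⊆ B ∧ OdotFinite p (ν A)}, ν A

/-- `τ` is σ-`⊙`-finite. -/
def SigmaOdotFinite [MeasurableSpace E] (p : PseudoMul) (τ : Set E → ℝ≥0∞) : Prop :=
  ∃ B : ℕ → Set E, (∀ n, MeasurableSet (B n)) ∧ (⋃ n, B n) = Set.univ ∧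
    ∀ n, OdotFinite p (τ (B n))

/-- Continuity from below. -/
def ContFromBelow [MeasurableSpace E] (ν : Set E → ℝ≥0∞) : Prop :=
  ∀ B : ℕ → Set E, (∀ n, MeasurableSet (B n)) → Monotone B →
    Tendsto (fun n => ν (B n)) atTop (nhds (ν (⋃ n, B n)))

/-- Continuity from above (no finiteness assumption). -/
def ContFromAbove [MeasurableSpace E] (ν : Set E → ℝ≥0∞) : Prop :=
  ∀ B : ℕ → Set E, (∀ n, MeasurableSet (B n)) → Antitone B →
    Tendsto (fun n => ν (B n)) atTop (nhds (ν (⋂ n, B n)))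

/-- An optimal measure: a maxitive measure continuous from below and from above. -/
def Optimal [MeasurableSpace E] (ν : Set E → ℝ≥0∞) : Prop :=
  Maxitive ν ∧ ContFromBelow ν ∧ ContFromAbove ν

/-- A finite measurable partition of `E`. -/
def IsFinMeasPartition [MeasurableSpace E] (π : Finset (Set E)) : Prop :=
  (∀ B ∈ π, MeasurableSet B) ∧ (π : Set (Set E)).Pairwise Disjoint ∧
    ⋃₀ (π : Set (Set E)) = Set.univ

/-- The (disjoint) variation `|ν|` of a set function `ν`. -/
noncomputable def variation [MeasurableSpace E] (ν : Set E → ℝ≥0∞) : ℝ≥0∞ :=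
  ⨆ π ∈ {π : Finset (Set E) | IsFinMeasPartition π}, ∑ B ∈ π, ν B


section VarAux

variable [MeasurableSpace E]

lemma maxitive_mono {ν : Set E → ℝ≥0∞} (hν : Maxitive ν) {A B : Set E}
    (hA : MeasurableSet A) (hB : MeasurableSet B) (hAB : A ⊆ B) : ν A ≤ ν B := by
  have h := hν.2 A B hA hB
  rw [Set.union_eq_self_of_subset_left hAB] at h
  rw [h]
  exact le_max_left _ _

/-- Families of finite disjoint measurable collections inside `B`. -/
def VarSet (B : Set E) : Set (Finset (Set E)) :=
  {π | (∀ C ∈ π, MeasurableSet C ∧ C ⊆ B) ∧ ((π : Set (Set E)).Pairwise Disjoint) ∧ ∅ ∉ π}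

lemma empty_mem_varSet (B : Set E) : (∅ : Finset (Set E)) ∈ VarSet B :=
  ⟨by simp, by simp, by simp⟩

/-- The variation of `ν` restricted to `B`. -/
noncomputable def varOn (ν : Set E → ℝ≥0∞) (B : Set E) : ℝ≥0∞ :=
  ⨆ π ∈ VarSet B, ∑ C ∈ π, ν C

lemma sum_le_varOn {ν : Set E → ℝ≥0∞} {B : Set E} {π : Finset (Set E)}
    (hπ : π ∈ VarSet B) : ∑ C ∈ π, ν C ≤ varOn ν B :=
  le_iSup₂_of_le π hπ le_rfl

lemma varOn_mono {ν : Set E → ℝ≥0∞} {A B : Set E} (hAB : A ⊆ B) :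
    varOn ν A ≤ varOn ν B := by
  refine iSup₂_le fun π hπ => sum_le_varOn ?_
  exact ⟨fun C hC => ⟨(hπ.1 C hC).1, (hπ.1 C hC).2.trans hAB⟩, hπ.2.1, hπ.2.2⟩

lemma le_varOn {ν : Set E → ℝ≥0∞} (h0 : ν ∅ = 0) {B : Set E} (hB : MeasurableSet B) :
    ν B ≤ varOn ν B := by
  by_cases hBe : B = ∅
  · simp [hBe, h0]
  · have hmem : ({B} : Finset (Set E)) ∈ VarSet B := by
      refine ⟨by simp [hB], by simp, by simp [Ne.symm hBe, eq_comm]⟩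
    simpa using sum_le_varOn (ν := ν) hmem

lemma varOn_le_of_zero {ν : Set E → ℝ≥0∞} {B : Set E} (hB : MeasurableSet B)
    (hν : Maxitive ν) (h0 : ν B = 0) : varOn ν B = 0 := by
  refine le_antisymm (iSup₂_le fun π hπ => le_of_eq (Finset.sum_eq_zero fun C hC => ?_)) bot_le
  have := maxitive_mono hν (hπ.1 C hC).1 hB (hπ.1 C hC).2
  exact le_antisymm (this.trans h0.le) bot_le

lemma varOn_empty {ν : Set E → ℝ≥0∞} : varOn ν (∅ : Set E) = 0 := by
  refine le_antisymm (iSup₂_le fun π hπ => ?_) bot_le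
  have hπe : π = ∅ := by
    refine Finset.eq_empty_of_forall_notMem fun C hC => hπ.2.2 ?_
    have : C = ∅ := Set.subset_empty_iff.mp (hπ.1 C hC).2
    rwa [this] at hC
  simp [hπe]

lemma varOn_add_varOn_le {ν : Set E → ℝ≥0∞} {A B : Set E} (hAB : Disjoint A B) :
    varOn ν A + varOn ν B ≤ varOn ν (A ∪ B) := by
  classical
  rw [varOn, varOn]
  refine ENNReal.biSup_add_biSup_le ⟨∅, empty_mem_varSet A⟩ ⟨∅, empty_mem_varSet B⟩
    fun πA hA πB hB => ?_
  have hdisj : Disjoint πA πB := by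
    rw [Finset.disjoint_left]
    intro C hCA hCB
    have hCe : C = ∅ := by
      have := hAB.mono (hA.1 C hCA).2 (hB.1 C hCB).2
      simpa using disjoint_self.mp this
    exact hA.2.2 (hCe ▸ hCA)
  rw [← Finset.sum_union hdisj]
  refine sum_le_varOn ⟨?_, ?_, ?_⟩
  · intro C hC
    rcases Finset.mem_union.mp hC with h | h
    · exact ⟨(hA.1 C h).1, (hA.1 C h).2.trans Set.subset_union_left⟩
    · exact ⟨(hB.1 C h).1, (hB.1 C h).2.trans Set.subset_union_right⟩
  · intro C hC D hD hne
    rw [Finset.coe_union, Set.mem_union] at hC hD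
    rcases hC with hC | hC <;> rcases hD with hD | hD
    · exact hA.2.1 hC hD hne
    · exact hAB.mono (hA.1 C hC).2 (hB.1 D hD).2
    · exact (hAB.mono (hA.1 D hD).2 (hB.1 C hC).2).symm
    · exact hB.2.1 hC hD hne
  · intro h
    rcases Finset.mem_union.mp h with h | h
    · exact hA.2.2 h
    · exact hB.2.2 h

lemma measurableSet_accumulate {g : ℕ → Set E} (hg : ∀ n, MeasurableSet (g n)) (n : ℕ) :
    MeasurableSet (Set.accumulate g n) := by
  rw [Set.accumulate_def]
  exact MeasurableSet.iUnion fun k => MeasurableSet.iUnion fun _ => hg k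

lemma accumulate_zero' (g : ℕ → Set E) : Set.accumulate g 0 = g 0 := by
  ext x; simp [Set.mem_accumulate, Nat.le_zero]

lemma accumulate_succ' (g : ℕ → Set E) (n : ℕ) :
    Set.accumulate g (n + 1) = Set.accumulate g n ∪ g (n + 1) := by
  ext x; simp [Set.mem_accumulate, Nat.le_add_one_iff]

lemma maxitive_accumulate_le {ν : Set E → ℝ≥0∞} (hν : Maxitive ν) {g : ℕ → Set E}
    (hg : ∀ n, MeasurableSet (g n)) :
    ∀ n, ν (Set.accumulate g n) ≤ ∑ k ∈ Finset.range (n + 1), ν (g k) := by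
  intro n
  induction n with
  | zero => simp [accumulate_zero' g]
  | succ n ih =>
    rw [accumulate_succ', hν.2 _ _ (measurableSet_accumulate hg n) (hg (n + 1)),
      Finset.sum_range_succ]
    exact max_le (ih.trans le_self_add) le_add_self

lemma sum_inter_le_varOn {ν : Set E → ℝ≥0∞} (h0 : ν ∅ = 0) {B A : Set E}
    {π : Finset (Set E)} (hπ : π ∈ VarSet B) (hA : MeasurableSet A) :
    ∑ C ∈ π, ν (C ∩ A) ≤ varOn ν A := by
  classical
  set σ := π.filter (fun C => C ∩ A ≠ ∅) with hσdef
  have hstep : ∑ C ∈ π, ν (C ∩ A) = ∑ C ∈ σ, ν (C ∩ A) := by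
    refine (Finset.sum_filter_of_ne fun C _ hne => ?_).symm
    intro hCe
    exact hne (by rw [hCe, h0])
  rw [hstep]
  have hinj : ∀ C ∈ σ, ∀ D ∈ σ, C ∩ A = D ∩ A → C = D := by
    intro C hC D hD hEq
    by_contra hne
    have hCπ := Finset.mem_of_mem_filter C hC
    have hDπ := Finset.mem_of_mem_filter D hD
    have hdisj := hπ.2.1 hCπ hDπ hne
    have : C ∩ A = ∅ := by
      have h2 := hdisj.mono (Set.inter_subset_left (t := A)) (Set.inter_subset_left (t := A))
      rw [hEq] at h2
      rw [hEq]
      simpa using disjoint_self.mp h2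
    exact (Finset.mem_filter.mp hC).2 this
  rw [← Finset.sum_image hinj]
  refine sum_le_varOn ⟨?_, ?_, ?_⟩
  · intro D hD
    obtain ⟨C, hC, rfl⟩ := Finset.mem_image.mp hD
    exact ⟨((hπ.1 C (Finset.mem_of_mem_filter C hC)).1).inter hA, Set.inter_subset_right⟩
  · intro D₁ hD₁ D₂ hD₂ hne
    rw [Finset.coe_image] at hD₁ hD₂
    obtain ⟨C₁, hC₁, rfl⟩ := hD₁
    obtain ⟨C₂, hC₂, rfl⟩ := hD₂
    have hCne : C₁ ≠ C₂ := fun h => hne (by rw [h])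
    exact (hπ.2.1 (Finset.mem_of_mem_filter _ hC₁) (Finset.mem_of_mem_filter _ hC₂)
      hCne).mono Set.inter_subset_left Set.inter_subset_left
  · intro h
    obtain ⟨C, hC, hCe⟩ := Finset.mem_image.mp h
    exact (Finset.mem_filter.mp hC).2 hCe

lemma varOn_iUnion {ν : Set E → ℝ≥0∞} (hν : SigmaMaxitive ν) (f : ℕ → Set E)
    (hf : ∀ n, MeasurableSet (f n)) (hd : Pairwise (Function.onFun Disjoint f)) :
    varOn ν (⋃ n, f n) = ∑' n, varOn ν (f n) := by
  have h0 : ν ∅ = 0 := hν.1.1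
  apply le_antisymm
  · refine iSup₂_le fun π hπ => ?_
    have key : ∀ C ∈ π, ν C ≤ ∑' n, ν (C ∩ f n) := by
      intro C hC
      obtain ⟨hCmeas, hCsub⟩ := hπ.1 C hC
      set B : ℕ → Set E := Set.accumulate (fun k => C ∩ f k) with hBdef
      have hBmeas : ∀ n, MeasurableSet (B n) :=
        measurableSet_accumulate fun k => hCmeas.inter (hf k)
      have hBU : ⋃ n, B n = C := by
        rw [hBdef, Set.iUnion_accumulate, ← Set.inter_iUnion,
          Set.inter_eq_self_of_subset_left hCsub]
      have := hν.2 B hBmeas Set.monotone_accumulate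
      rw [hBU] at this
      rw [this]
      refine iSup_le fun n => ?_
      refine (maxitive_accumulate_le hν.1 (fun k => hCmeas.inter (hf k)) n).trans ?_
      exact ENNReal.sum_le_tsum _
    calc ∑ C ∈ π, ν C ≤ ∑ C ∈ π, ∑' n, ν (C ∩ f n) := Finset.sum_le_sum key
      _ = ∑' n, ∑ C ∈ π, ν (C ∩ f n) := (Summable.tsum_finsetSum fun _ _ => ENNReal.summable).symm
      _ ≤ ∑' n, varOn ν (f n) :=
          ENNReal.tsum_le_tsum fun n => sum_inter_le_varOn h0 hπ (hf n)
  · rw [ENNReal.tsum_eq_iSup_nat]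
    refine iSup_le fun N => ?_
    have main : ∀ N : ℕ, ∑ n ∈ Finset.range N, varOn ν (f n)
        ≤ varOn ν (⋃ n ∈ Finset.range N, f n) := by
      intro N
      induction N with
      | zero => simp
      | succ N ih =>
        have hU : ⋃ n ∈ Finset.range (N + 1), f n
            = (⋃ n ∈ Finset.range N, f n) ∪ f N := by
          rw [Finset.range_add_one]
          simp [Set.union_comm]
        have hdisj : Disjoint (⋃ n ∈ Finset.range N, f n) (f N) := by
          rw [Set.disjoint_left]
          intro x hx hxN
          simp only [Set.mem_iUnion] at hx
          obtain ⟨k, hk, hxk⟩ := hx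
          exact Set.disjoint_left.mp (hd (Finset.mem_range.mp hk).ne) hxk hxN
        rw [hU, Finset.sum_range_succ]
        exact le_trans (add_le_add_left ih _) (varOn_add_varOn_le hdisj)
    refine (main N).trans (varOn_mono ?_)
    exact Set.iUnion₂_subset fun n _ => Set.subset_iUnion f n

end VarAux

/-- Every σ-maxitive measure of bounded variation is finite and essential. -/
theorem sigmaMaxitive_boundedVariation_finite_essential [MeasurableSpace E]
    (ν : Set E → ℝ≥0∞) (hν : SigmaMaxitive ν) (hbv : variation ν < ⊤) :
    (∀ B : Set E, MeasurableSet B → ν B < ⊤) ∧ Essential ν := by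
  classical
  obtain ⟨hmax, hσ⟩ := hν
  have h0 : ν ∅ = 0 := hmax.1
  -- varOn over univ is bounded by the variation
  have hvu : varOn ν Set.univ ≤ variation ν := by
    refine iSup₂_le fun π hπ => ?_
    set R : Set E := Set.univ \ ⋃₀ (π : Set (Set E)) with hRdef
    have hUmeas : MeasurableSet (⋃₀ (π : Set (Set E))) :=
      MeasurableSet.sUnion π.finite_toSet.countable fun C hC => (hπ.1 C hC).1
    have hRmeas : MeasurableSet R := MeasurableSet.univ.diff hUmeas
    have hpart : IsFinMeasPartition (insert R π) := by
      refine ⟨?_, ?_, ?_⟩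
      · intro C hC
        rcases Finset.mem_insert.mp hC with rfl | h
        · exact hRmeas
        · exact (hπ.1 C h).1
      · intro C hC D hD hne
        rw [Finset.coe_insert, Set.mem_insert_iff] at hC hD
        have hRd : ∀ C ∈ π, Disjoint R C := by
          intro C hC
          rw [Set.disjoint_left]
          intro x hx hxC
          exact hx.2 ⟨C, hC, hxC⟩
        rcases hC with rfl | hC <;> rcases hD with rfl | hD
        · exact absurd rfl hne
        · exact hRd D hD
        · exact (hRd C hC).symm
        · exact hπ.2.1 hC hD hne
      · rw [Finset.coe_insert, Set.sUnion_insert, hRdef, Set.diff_union_self]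
        simp
    calc ∑ C ∈ π, ν C ≤ ∑ C ∈ insert R π, ν C :=
          Finset.sum_le_sum_of_subset (Finset.subset_insert R π)
      _ ≤ variation ν := le_iSup₂_of_le (insert R π) hpart le_rfl
  have hvarfin : ∀ B : Set E, varOn ν B < ⊤ := fun B =>
    lt_of_le_of_lt (le_trans (varOn_mono (Set.subset_univ B)) hvu) hbv
  have hfin : ∀ B : Set E, MeasurableSet B → ν B < ⊤ := fun B hB =>
    lt_of_le_of_lt (le_varOn h0 hB) (hvarfin B)
  refine ⟨hfin, ?_⟩
  -- Construct the σ-additive measure from varOn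
  set m : Measure E := Measure.ofMeasurable (fun B _ => varOn ν B)
    varOn_empty
    (fun f hf hd => varOn_iUnion ⟨hmax, hσ⟩ f hf hd) with hmdef
  have hmB : ∀ B : Set E, MeasurableSet B → m B = varOn ν B := fun B hB =>
    Measure.ofMeasurable_apply B hB
  haveI : IsFiniteMeasure m := by
    refine ⟨?_⟩
    rw [hmB Set.univ MeasurableSet.univ]
    exact hvarfin Set.univ
  refine ⟨m, inferInstance, fun B hB => ?_⟩
  rw [hmB B hB]
  constructor
  · intro hpos
    exact lt_of_lt_of_le hpos (le_varOn h0 hB)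
  · intro hpos
    rcases eq_or_lt_of_le (bot_le : (0 : ℝ≥0∞) ≤ ν B) with h | h
    · rw [varOn_le_of_zero hB hmax h.symm] at hpos
      exact absurd hpos (lt_irrefl 0)
    · exact h
end

section
/- Let ⊙ be a pseudo-multiplication on [0,∞] and ν a σ-maxitive measure on a σ-algebra 𝓑. Then for every 𝓑-measurable f : E → [0,∞], every r ∈ [0,∞), and every B ∈ 𝓑: (i) the integral of the indicator 1_B equals ν(B); (ii) homogeneity: ∫_E (r ⊙ f) ⊙ dν = r ⊙ ∫_E f ⊙ dν; (iii) σ-maxitivity in the integrand: for every sequence of 𝓑-measurable maps fₙ : E → [0,∞], ∫_E (supₙ fₙ) ⊙ dν = supₙ ∫_E fₙ ⊙ dν; (iv) the set function B ↦ ∫_B f ⊙ dν is a σ-maxitive measure on 𝓑. -/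
open scoped ENNReal
open Set Filter MeasureTheory

variable {E : Type*}

section AuxLemmas
open Topology
variable {E : Type*}

namespace PseudoMul

lemma one_pos (p : PseudoMul) : 0 < p.one := by
  rcases (zero_le : 0 ≤ p.one).eq_or_lt with h | h
  · have h1 := p.one_op 1
    rw [← h, p.zero_op] at h1
    exact absurd h1.symm one_ne_zero
  · exact h

lemma continuousAt_right (p : PseudoMul) {s : ℝ≥0∞} (h0 : 0 < s) (h1 : s < ⊤) (y : ℝ≥0∞) :
    ContinuousAt (p.op s) y := by
  have hopen : IsOpen (Ioo (0:ℝ≥0∞) ⊤ ×ˢ (univ : Set ℝ≥0∞)) := isOpen_Ioo.prod isOpen_univ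
  have hca : ContinuousAt (fun q : ℝ≥0∞ × ℝ≥0∞ => p.op q.1 q.2) (s, y) :=
    p.contOn.continuousAt (hopen.mem_nhds ⟨⟨h0, h1⟩, mem_univ _⟩)
  exact hca.comp ((continuous_const.prodMk continuous_id).continuousAt)

lemma op_iSup (p : PseudoMul) {s : ℝ≥0∞} (hs : s < ⊤) {ι : Sort*} (g : ι → ℝ≥0∞) :
    p.op s (⨆ i, g i) = ⨆ i, p.op s (g i) := by
  rcases (zero_le : 0 ≤ s).eq_or_lt with h | h
  · simp [← h, p.zero_op]
  · exact Monotone.map_iSup_of_continuousAt (p.continuousAt_right h hs _) (p.monoRight s)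
      (by simpa using p.op_zero s)

end PseudoMul

lemma iSup_Iio_eq {g : ℝ≥0∞ → ℝ≥0∞} {a : ℝ≥0∞} (ha : 0 < a)
    (hmono : Monotone g) (hcont : Tendsto g (𝓝[<] a) (𝓝 (g a))) :
    ⨆ t ∈ Iio a, g t = g a := by
  refine le_antisymm (iSup₂_le fun t ht => hmono ht.le) ?_
  haveI : (𝓝[<] a).NeBot := nhdsWithin_Iio_self_neBot' ⟨0, ha⟩
  refine le_of_tendsto hcont ?_
  filter_upwards [self_mem_nhdsWithin] with t ht
  exact le_iSup₂ (f := fun t (_ : t ∈ Iio a) => g t) t ht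

namespace PseudoMul

lemma op_left_sup (p : PseudoMul) {a : ℝ≥0∞} (ha : 0 < a) (c : ℝ≥0∞) :
    ⨆ t ∈ Iio a, p.op t c = p.op a c := by
  refine iSup_Iio_eq ha (p.monoLeft c) ?_
  have h1 : ContinuousWithinAt (fun s => p.op s c) (Ioi 0) a := p.contLeft c a ha
  have h2 : 𝓝[<] a ≤ 𝓝[Ioi 0] a := by
    have hm : Ioi (0:ℝ≥0∞) ∈ 𝓝[Iio a] a :=
      mem_nhdsWithin_of_mem_nhds (isOpen_Ioi.mem_nhds ha)
    rw [← nhdsWithin_inter_of_mem' hm]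
    exact nhdsWithin_mono a inter_subset_right
  exact h1.mono_left h2

lemma op_right_sup (p : PseudoMul) {r : ℝ≥0∞} (h0 : 0 < r) (hr : r < ⊤) (c : ℝ≥0∞) :
    ⨆ t ∈ Iio c, p.op r t = p.op r c := by
  rcases (zero_le : 0 ≤ c).eq_or_lt with h | h
  · simp [← h, p.op_zero]
  · exact iSup_Iio_eq h (p.monoRight r)
      ((p.continuousAt_right h0 hr c).tendsto.mono_left nhdsWithin_le_nhds)

end PseudoMul

lemma Maxitive.mono' [MeasurableSpace E] {ν : Set E → ℝ≥0∞} (h : Maxitive ν)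
    {A B : Set E} (hA : MeasurableSet A) (hB : MeasurableSet B) (hAB : A ⊆ B) :
    ν A ≤ ν B := by
  have h2 := h.2 A B hA hB
  rw [union_eq_self_of_subset_left hAB] at h2
  rw [h2]; exact le_max_left _ _

lemma SigmaMaxitive.iUnion' [MeasurableSpace E] {ν : Set E → ℝ≥0∞} (h : SigmaMaxitive ν)
    (A : ℕ → Set E) (hA : ∀ n, MeasurableSet (A n)) :
    ν (⋃ n, A n) = ⨆ n, ν (A n) := by
  have hacc : ∀ n, MeasurableSet (accumulate A n) := by
    intro n
    rw [Set.accumulate_def]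
    exact MeasurableSet.biUnion (to_countable _) fun k _ => hA k
  refine le_antisymm ?_ (iSup_le fun n => h.1.mono' (hA n) (MeasurableSet.iUnion hA)
    (subset_iUnion A n))
  rw [← Set.iUnion_accumulate, h.2 _ hacc monotone_accumulate]
  refine iSup_le fun n => ?_
  induction n with
  | zero => simpa [Set.accumulate_def, Nat.le_zero] using le_iSup (fun k => ν (A k)) 0
  | succ n ih =>
      have hstep : accumulate A (n + 1) = accumulate A n ∪ A (n + 1) := by
        simp only [Set.accumulate_def]
        ext x
        simp only [mem_iUnion, mem_union, Nat.le_add_one_iff]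
        constructor
        · rintro ⟨k, hk | rfl, hx⟩
          exacts [Or.inl ⟨k, hk, hx⟩, Or.inr hx]
        · rintro (⟨k, hk, hx⟩ | hx)
          exacts [⟨k, Or.inl hk, hx⟩, ⟨n + 1, Or.inr rfl, hx⟩]
      rw [hstep, h.1.2 _ _ (hacc n) (hA (n + 1))]
      exact max_le ih (le_iSup (fun k => ν (A k)) (n + 1))

end AuxLemmas

/-- Elementary properties of the idempotent `⊙`-integral with respect to a σ-maxitive
measure: value on indicators, homogeneity, σ-maxitivity in the integrand, and
σ-maxitivity of `B ↦ ∫_B f ⊙ dν`. -/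
theorem iInt_properties [MeasurableSpace E] (p : PseudoMul) (ν : Set E → ℝ≥0∞)
    (hν : SigmaMaxitive ν) :
    (∀ B : Set E, MeasurableSet B →
      iInt p ν (B.indicator fun _ => p.one) Set.univ = ν B) ∧
    (∀ f : E → ℝ≥0∞, Premeasurable f → ∀ r ∈ Set.Iio (⊤ : ℝ≥0∞),
      iInt p ν (fun x => p.op r (f x)) Set.univ = p.op r (iInt p ν f Set.univ)) ∧
    (∀ f : ℕ → E → ℝ≥0∞, (∀ n, Premeasurable (f n)) →
      iInt p ν (fun x => ⨆ n, f n x) Set.univ = ⨆ n, iInt p ν (f n) Set.univ) ∧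
    (∀ f : E → ℝ≥0∞, Premeasurable f → SigmaMaxitive (fun B => iInt p ν f B)) := by
  refine ⟨?_, ?_, ?_, ?_⟩
  -- (i) indicator
  · intro B hB
    have h1 : ∀ t : ℝ≥0∞, Set.univ ∩ {x | t < B.indicator (fun _ => p.one) x} =
        if t < p.one then B else ∅ := by
      intro t
      rw [univ_inter]
      split_ifs with h
      · ext x
        by_cases hx : x ∈ B <;> simp [Set.indicator_apply, hx, h]
      · ext x
        by_cases hx : x ∈ B <;> simp [Set.indicator_apply, hx, h]
    have h2 : iInt p ν (B.indicator fun _ => p.one) Set.univ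
        = ⨆ t ∈ Iio p.one, p.op t (ν B) := by
      rw [iInt]
      refine le_antisymm (iSup₂_le fun t ht => ?_) (iSup₂_le fun t ht => ?_)
      · rw [h1 t]
        split_ifs with h
        · exact le_iSup₂ (f := fun t (_ : t ∈ Iio p.one) => p.op t (ν B)) t h
        · simp [hν.1.1, p.op_zero]
      · have ht' : t < ⊤ := lt_of_lt_of_le ht le_top
        refine le_iSup₂_of_le t ht' ?_
        rw [h1 t, if_pos (mem_Iio.mp ht)]
    rw [h2, p.op_left_sup p.one_pos, p.one_op]
  -- (ii) homogeneity
  · intro f hf r hr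
    rcases (zero_le : 0 ≤ r).eq_or_lt with h0 | h0
    · have hz : iInt p ν (fun x => p.op 0 (f x)) Set.univ = 0 := by
        rw [iInt]
        refine le_antisymm (iSup₂_le fun t ht => ?_) (zero_le)
        have he : Set.univ ∩ {x | t < p.op 0 (f x)} = ∅ := by
          ext x; simp [p.zero_op]
        rw [he, hν.1.1, p.op_zero]
      rw [← h0, hz, p.zero_op]
    · obtain ⟨Q, hQc, hQd⟩ := TopologicalSpace.exists_countable_dense ℝ≥0∞
      obtain ⟨u, hu⟩ := hQc.exists_eq_range hQd.nonempty
      set C : ℝ≥0∞ → ℕ → Set E := fun s n =>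
        if s < p.op r (u n) then {x | u n < f x} else ∅ with hC
      have hCm : ∀ s n, MeasurableSet (C s n) := by
        intro s n
        simp only [hC]
        split_ifs
        · exact hf (u n)
        · exact MeasurableSet.empty
      have hCu : ∀ s : ℝ≥0∞, {x | s < p.op r (f x)} = ⋃ n, C s n := by
        intro s
        ext x
        simp only [mem_iUnion, mem_setOf_eq]
        constructor
        · intro hx
          have hfx : 0 < f x := by
            rcases (zero_le : 0 ≤ (f x)).eq_or_lt with h | h
            · rw [← h, p.op_zero] at hx
              exact absurd hx (not_lt_of_ge (zero_le : 0 ≤ s))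
            · exact h
          rw [← p.op_right_sup h0 hr (f x)] at hx
          obtain ⟨t, ht, hst⟩ : ∃ t < f x, s < p.op r t := by
            simpa [lt_iSup_iff] using hx
          obtain ⟨q, hqQ, hq⟩ := hQd.exists_between ht
          rw [hu] at hqQ
          obtain ⟨n, rfl⟩ := hqQ
          refine ⟨n, ?_⟩
          have hcond : s < p.op r (u n) := lt_of_lt_of_le hst (p.monoRight r hq.1.le)
          simp only [hC, if_pos hcond, mem_setOf_eq]
          exact hq.2
        · rintro ⟨n, hn⟩
          simp only [hC] at hn
          split_ifs at hn with hcond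
          · exact lt_of_lt_of_le hcond (p.monoRight r (le_of_lt hn))
          · exact absurd hn (notMem_empty x)
      have hmeasS : ∀ s : ℝ≥0∞, MeasurableSet {x | s < p.op r (f x)} := by
        intro s; rw [hCu s]; exact MeasurableSet.iUnion (hCm s)
      set M := ⨆ t ∈ Iio (⊤ : ℝ≥0∞), p.op (p.op r t) (ν {x | t < f x}) with hM
      have step1 : iInt p ν (fun x => p.op r (f x)) Set.univ ≤ M := by
        rw [iInt]
        simp only [univ_inter]
        refine iSup₂_le fun s hs => ?_
        rw [hCu s, hν.iUnion' _ (hCm s), p.op_iSup hs]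
        refine iSup_le fun n => ?_
        by_cases hcond : s < p.op r (u n)
        · simp only [hC, if_pos hcond]
          by_cases hun : u n < ⊤
          · refine le_trans (p.monoLeft _ hcond.le) ?_
            exact le_iSup₂ (f := fun t (_ : t ∈ Iio (⊤:ℝ≥0∞)) =>
              p.op (p.op r t) (ν {x | t < f x})) (u n) hun
          · have hun' : u n = ⊤ := top_le_iff.mp (not_lt.mp hun)
            have hemp : {x | u n < f x} = ∅ := by ext x; simp [hun']
            rw [hemp, hν.1.1, p.op_zero]
            exact zero_le
        · simp only [hC, if_neg hcond]
          rw [hν.1.1, p.op_zero]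
          exact zero_le
      have step2 : M ≤ iInt p ν (fun x => p.op r (f x)) Set.univ := by
        rw [iInt]
        simp only [univ_inter]
        refine iSup₂_le fun t ht => ?_
        rcases (zero_le : 0 ≤ (p.op r t)).eq_or_lt with ha | ha
        · rw [← ha, p.zero_op]; exact zero_le
        · rw [← p.op_left_sup ha (ν {x | t < f x})]
          refine iSup₂_le fun s hs => ?_
          have hs' : s < ⊤ := lt_of_lt_of_le hs le_top
          have hsub : {x | t < f x} ⊆ {x | s < p.op r (f x)} := fun x hx =>
            lt_of_lt_of_le hs (p.monoRight r (le_of_lt hx))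
          refine le_trans (p.monoRight s (hν.1.mono' (hf t) (hmeasS s) hsub)) ?_
          exact le_iSup₂ (f := fun s (_ : s ∈ Iio (⊤:ℝ≥0∞)) =>
            p.op s (ν {x | s < p.op r (f x)})) s hs'
      have step3 : p.op r (iInt p ν f Set.univ) = M := by
        rw [iInt]
        simp only [univ_inter]
        rw [p.op_iSup hr]
        refine iSup_congr fun t => ?_
        rw [p.op_iSup hr]
        exact iSup_congr fun ht => (p.assoc r t _).symm
      rw [← step3] at step1 step2
      exact le_antisymm step1 step2
  -- (iii) sigma-maxitivity in the integrand
  · intro f hf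
    have key : ∀ t ∈ Iio (⊤:ℝ≥0∞), p.op t (ν {x | t < ⨆ n, f n x})
        = ⨆ n, p.op t (ν {x | t < f n x}) := by
      intro t ht
      have hset : {x | t < ⨆ n, f n x} = ⋃ n, {x | t < f n x} := by
        ext x; simp [lt_iSup_iff]
      rw [hset, hν.iUnion' _ (fun n => hf n t), p.op_iSup ht]
    rw [iInt]
    simp only [univ_inter]
    refine le_antisymm (iSup₂_le fun t ht => ?_) (iSup_le fun n => ?_)
    · rw [key t ht]
      refine iSup_le fun n => le_iSup_of_le n ?_
      rw [iInt]
      simp only [univ_inter]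
      exact le_iSup₂ (f := fun t (_ : t ∈ Iio (⊤:ℝ≥0∞)) =>
        p.op t (ν {x | t < f n x})) t ht
    · rw [iInt]
      simp only [univ_inter]
      refine iSup₂_le fun t ht => le_iSup₂_of_le t ht ?_
      rw [key t ht]
      exact le_iSup (fun n => p.op t (ν {x | t < f n x})) n
  -- (iv) B ↦ ∫_B f is sigma-maxitive
  · intro f hf
    refine ⟨⟨?_, ?_⟩, ?_⟩
    · show iInt p ν f ∅ = 0
      rw [iInt]
      refine le_antisymm (iSup₂_le fun t ht => ?_) (zero_le)
      rw [empty_inter, hν.1.1, p.op_zero]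
    · intro A B hA hB
      show iInt p ν f (A ∪ B) = max (iInt p ν f A) (iInt p ν f B)
      rw [iInt, iInt, iInt]
      have h1 : (⨆ t ∈ Iio (⊤:ℝ≥0∞), p.op t (ν ((A ∪ B) ∩ {x | t < f x})))
          = ⨆ t ∈ Iio (⊤:ℝ≥0∞), (p.op t (ν (A ∩ {x | t < f x}))
            ⊔ p.op t (ν (B ∩ {x | t < f x}))) := by
        refine iSup_congr fun t => iSup_congr fun ht => ?_
        rw [union_inter_distrib_right, hν.1.2 _ _ (hA.inter (hf t)) (hB.inter (hf t)),
          (p.monoRight t).map_max]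
      rw [h1]
      simp only [iSup_sup_eq]
    · intro B hB hmono
      show iInt p ν f (⋃ n, B n) = ⨆ n, iInt p ν f (B n)
      rw [iInt]
      have hkey : ∀ t ∈ Iio (⊤:ℝ≥0∞), p.op t (ν ((⋃ n, B n) ∩ {x | t < f x}))
          = ⨆ n, p.op t (ν (B n ∩ {x | t < f x})) := by
        intro t ht
        rw [iUnion_inter, hν.2 _ (fun n => (hB n).inter (hf t))
          (fun m n hmn => inter_subset_inter (hmono hmn) Subset.rfl), p.op_iSup ht]
      refine le_antisymm (iSup₂_le fun t ht => ?_) (iSup_le fun n => ?_)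
      · rw [hkey t ht]
        refine iSup_le fun n => le_iSup_of_le n ?_
        rw [iInt]
        exact le_iSup₂ (f := fun t (_ : t ∈ Iio (⊤:ℝ≥0∞)) =>
          p.op t (ν (B n ∩ {x | t < f x}))) t ht
      · rw [iInt]
        refine iSup₂_le fun t ht => le_iSup₂_of_le t ht ?_
        rw [hkey t ht]
        exact le_iSup (fun n => p.op t (ν (B n ∩ {x | t < f x}))) n
end
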